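/- SM-likeness is preserved under conditioning on coordinates: Let μ be a distribution on 𝒳×𝒴 (finite sets), k a positive integer, and λ a distribution on 𝒳^k×𝒴^k that is SM-like for μ^k. Fix a coordinate j ∈ [k] and subsets A, B ⊆ [k]\{j} with A ∪ B = [k]\{j}, and fix values a ∈ 𝒳^A, b ∈ 𝒴^B such that the event {X_A = a and Y_B = b} has positive probability under (X,Y) ∼ λ. Then the joint distribution of (X_j, Y_j) under λ conditioned on {X_A = a, Y_B = b} is SM-like for μ. -/

import Mathlib

open scoped BigOperators ENNReal
open Classical

noncomputable section

/-- `p` is a probability distribution on the finite type `α`. -/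
def IsDist {α : Type*} [Fintype α] (p : α → ℝ) : Prop :=
  (∀ a, 0 ≤ p a) ∧ ∑ a, p a = 1

/-- Relative entropy (base 2) `S(p‖q)`. -/
def relEnt {α : Type*} [Fintype α] (p q : α → ℝ) : ℝ :=
  ∑ a, if 0 < p a then p a * Real.logb 2 (p a / q a) else 0

/-- Relative min-entropy `S∞(p‖q) = max_{a : p a > 0} log (p a / q a)`. -/
def relMinEnt {α : Type*} [Fintype α] (p q : α → ℝ) : ℝ :=
  sSup {r | ∃ a, 0 < p a ∧ r = Real.logb 2 (p a / q a)}

/-- Marginal on the first component. -/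
def margX {α β : Type*} [Fintype α] [Fintype β] (p : α × β → ℝ) : α → ℝ :=
  fun x => ∑ y, p (x, y)

/-- Marginal on the second component. -/
def margY {α β : Type*} [Fintype α] [Fintype β] (p : α × β → ℝ) : β → ℝ :=
  fun y => ∑ x, p (x, y)

/-- Conditional distribution of the second component given the first equals `x`. -/
def condY {α β : Type*} [Fintype α] [Fintype β] (p : α × β → ℝ) (x : α) : β → ℝ :=
  fun y => p (x, y) / margX p x

/-- Conditional distribution of the first component given the second equals `y`. -/
def condX {α β : Type*} [Fintype α] [Fintype β] (p : α × β → ℝ) (y : β) : α → ℝ :=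
  fun x => p (x, y) / margY p y

/-- `crent^μ_𝒳(λ) = E_{x←X₁} S((Y₁)_x ‖ Y_x)`. -/
def crentX {α β : Type*} [Fintype α] [Fintype β] (lam mu : α × β → ℝ) : ℝ :=
  ∑ x, margX lam x * relEnt (condY lam x) (condY mu x)

/-- `crent^μ_𝒴(λ) = E_{y←Y₁} S((X₁)_y ‖ X_y)`. -/
def crentY {α β : Type*} [Fintype α] [Fintype β] (lam mu : α × β → ℝ) : ℝ :=
  ∑ y, margY lam y * relEnt (condX lam y) (condX mu y)

/-- `λ` is one-way for `μ` with respect to `𝒳`: `λ(y|x) = μ(y|x)` on the support of `λ`. -/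
def OneWayX {α β : Type*} [Fintype α] [Fintype β] (lam mu : α × β → ℝ) : Prop :=
  ∀ x y, 0 < lam (x, y) → condY lam x y = condY mu x y

/-- `λ` is one-way for `μ` with respect to `𝒴`: `λ(x|y) = μ(x|y)` on the support of `λ`. -/
def OneWayY {α β : Type*} [Fintype α] [Fintype β] (lam mu : α × β → ℝ) : Prop :=
  ∀ x y, 0 < lam (x, y) → condX lam y x = condX mu y x

/-- `λ` is SM-like for `μ`. -/
def SMLike {α β : Type*} [Fintype α] [Fintype β] (lam mu : α × β → ℝ) : Prop :=
  ∃ θ : α × β → ℝ, IsDist θ ∧ OneWayX θ mu ∧ OneWayY lam θ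

/-- `err_{f,S}(λ) = min_{z ∈ S} Pr_{(x,y)←λ}[(x,y,z) ∉ f]`. -/
def errRel {α β γ : Type*} [Fintype α] [Fintype β] (f : Set (α × β × γ)) (S : Set γ)
    (lam : α × β → ℝ) : ℝ :=
  sInf {e | ∃ z ∈ S, e = ∑ p : α × β, if (p.1, p.2, z) ∉ f then lam p else 0}

/-- `ess^μ(f,S) = 1 − Pr_{(x,y)←μ}[∃ z ∉ S, (x,y,z) ∈ f]`. -/
def ess {α β γ : Type*} [Fintype α] [Fintype β] (f : Set (α × β × γ)) (S : Set γ)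
    (mu : α × β → ℝ) : ℝ :=
  1 - ∑ p : α × β, if ∃ z ∉ S, (p.1, p.2, z) ∈ f then mu p else 0

/-- The two-way `ε`-error conditional relative entropy bound `crent^{2,μ}_ε(f,S)`
(`+∞` if no feasible `λ` exists). -/
def crent2 {α β γ : Type*} [Fintype α] [Fintype β] (f : Set (α × β × γ)) (S : Set γ)
    (mu : α × β → ℝ) (ε : ℝ) : ℝ≥0∞ :=
  sInf {c | ∃ lam : α × β → ℝ, IsDist lam ∧ SMLike lam mu ∧ errRel f S lam ≤ ε ∧
    c = ENNReal.ofReal (crentX lam mu + crentY lam mu)}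

/-- The two-way `ε`-error relative min-entropy bound `ment^{2,μ}_ε(f,S)`
(`+∞` if no feasible `λ` exists). -/
def ment2 {α β γ : Type*} [Fintype α] [Fintype β] (f : Set (α × β × γ)) (S : Set γ)
    (mu : α × β → ℝ) (ε : ℝ) : ℝ≥0∞ :=
  sInf {c | ∃ lam : α × β → ℝ, IsDist lam ∧ SMLike lam mu ∧ errRel f S lam ≤ ε ∧
    c = ENNReal.ofReal (relMinEnt lam mu)}

/-- The `k`-fold product distribution `μ^k` on `𝒳^k × 𝒴^k`. -/
def prodDist {α β : Type*} [Fintype α] [Fintype β] (mu : α × β → ℝ) (k : ℕ) :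
    (Fin k → α) × (Fin k → β) → ℝ :=
  fun p => ∏ i, mu (p.1 i, p.2 i)

/-- The `k`-fold product relation `f^k`. -/
def relPow {α β γ : Type*} (f : Set (α × β × γ)) (k : ℕ) :
    Set ((Fin k → α) × (Fin k → β) × (Fin k → γ)) :=
  {p | ∀ i, (p.1 i, p.2.1 i, p.2.2 i) ∈ f}


/-- The joint distribution of `(X_j, Y_j)` under `λ` conditioned on
`{X_A = a, Y_B = b}` (where `a`, `b` are given as total functions whose values
matter only on `A`, resp. `B`). -/
def condCoord {α β : Type*} [Fintype α] [Fintype β] {k : ℕ}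
    (lam : (Fin k → α) × (Fin k → β) → ℝ) (j : Fin k) (A B : Finset (Fin k))
    (a : Fin k → α) (b : Fin k → β) : α × β → ℝ :=
  fun q =>
    (∑ p : (Fin k → α) × (Fin k → β),
        if (∀ i ∈ A, p.1 i = a i) ∧ (∀ i ∈ B, p.2 i = b i) ∧ p.1 j = q.1 ∧ p.2 j = q.2
        then lam p else 0) /
    (∑ p : (Fin k → α) × (Fin k → β),
        if (∀ i ∈ A, p.1 i = a i) ∧ (∀ i ∈ B, p.2 i = b i) then lam p else 0)

/-- SM-likeness is preserved under conditioning on coordinates: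
if `λ` on `𝒳^k × 𝒴^k` is SM-like for `μ^k`, `j ∈ [k]`, `A, B ⊆ [k]∖{j}` with
`A ∪ B = [k]∖{j}`, and the event `{X_A = a, Y_B = b}` has positive probability
under `λ`, then the conditional distribution of `(X_j, Y_j)` is SM-like for `μ`. -/
lemma sum_eq_of_agree {γ : Type*} [Fintype γ] (u v : γ → ℝ) (hv : ∀ c, 0 ≤ v c)
    (hsum : ∑ c, u c = ∑ c, v c) (h : ∀ c, u c ≠ 0 → u c = v c) : ∀ c, u c = v c := by
  have hnn : ∀ c ∈ Finset.univ, (0:ℝ) ≤ v c - u c := by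
    intro c _
    by_cases hc : u c = 0
    · simpa [hc] using hv c
    · simp [h c hc]
  have hz : ∑ c, (v c - u c) = 0 := by
    rw [Finset.sum_sub_distrib, hsum, sub_self]
  have := (Finset.sum_eq_zero_iff_of_nonneg hnn).1 hz
  intro c
  have := this c (Finset.mem_univ c)
  linarith

lemma sum_pi_ite {β : Type*} [Fintype β] {k : ℕ} (C : Finset (Fin k)) (bb : Fin k → β)
    (g : Fin k → β → ℝ) :
    (∑ Y : Fin k → β, if ∀ i ∈ C, Y i = bb i then ∏ i, g i (Y i) else 0)
      = (∏ i ∈ C, g i (bb i)) * ∏ i ∈ Cᶜ, ∑ y, g i y := by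
  have h1 : ∀ Y : Fin k → β,
      (if ∀ i ∈ C, Y i = bb i then ∏ i, g i (Y i) else 0)
        = ∏ i, (if i ∈ C then (if Y i = bb i then g i (Y i) else 0) else g i (Y i)) := by
    intro Y
    by_cases h : ∀ i ∈ C, Y i = bb i
    · rw [if_pos h]
      refine Finset.prod_congr rfl fun i _ => ?_
      by_cases hi : i ∈ C <;> simp [hi, h]
    · rw [if_neg h]
      push_neg at h
      obtain ⟨i, hiC, hne⟩ := h
      exact (Finset.prod_eq_zero (Finset.mem_univ i) (by simp [hiC, hne])).symm
  rw [Finset.sum_congr rfl fun Y _ => h1 Y]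
  have h2 : (∑ Y : Fin k → β, ∏ i,
      (if i ∈ C then (if Y i = bb i then g i (Y i) else 0) else g i (Y i)))
      = ∏ i, ∑ y, (if i ∈ C then (if y = bb i then g i y else 0) else g i y) := by
    rw [Finset.prod_univ_sum]
    rw [← Fintype.piFinset_univ]
  rw [h2, ← Finset.prod_mul_prod_compl C]
  congr 1
  · refine Finset.prod_congr rfl fun i hi => ?_
    simp [hi]
  · refine Finset.prod_congr rfl fun i hi => ?_
    rw [Finset.mem_compl] at hi
    simp [hi]

theorem smLike_condCoord {α β : Type*} [Fintype α] [Fintype β]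
    (mu : α × β → ℝ) (hmu : IsDist mu) (k : ℕ) (hk : 0 < k)
    (lam : (Fin k → α) × (Fin k → β) → ℝ) (hlam : IsDist lam)
    (hsm : SMLike lam (prodDist mu k))
    (j : Fin k) (A B : Finset (Fin k))
    (hA : A ⊆ Finset.univ \ {j}) (hB : B ⊆ Finset.univ \ {j})
    (hAB : A ∪ B = Finset.univ \ {j})
    (a : Fin k → α) (b : Fin k → β)
    (hpos : 0 < ∑ p : (Fin k → α) × (Fin k → β),
        if (∀ i ∈ A, p.1 i = a i) ∧ (∀ i ∈ B, p.2 i = b i) then lam p else 0) :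
    SMLike (condCoord lam j A B a b) mu := by
  obtain ⟨θ, hθd, hθX, hθY⟩ := hsm
  have hμn : ∀ q, 0 ≤ mu q := hmu.1
  have hln : ∀ q, 0 ≤ lam q := hlam.1
  have hθn : ∀ q, 0 ≤ θ q := hθd.1
  -- basics about sets
  have hjA : j ∉ A := fun h => by simpa using hA h
  have hjB : j ∉ B := fun h => by simpa using hB h
  have hmem : ∀ i : Fin k, i ≠ j → i ∈ A ∨ i ∈ B := by
    intro i hi
    rw [← Finset.mem_union, hAB]
    simp [hi]
  have hAne : ∀ i ∈ A, i ≠ j := fun i hi => by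
    have := hA hi; simp at this; exact this
  have hBne : ∀ i ∈ B, i ≠ j := fun i hi => by
    have := hB hi; simp at this; exact this
  have hcompA : Aᶜ = insert j (B \ A) := by
    ext i
    simp only [Finset.mem_compl, Finset.mem_insert, Finset.mem_sdiff]
    constructor
    · intro hiA
      by_cases hij : i = j
      · exact Or.inl hij
      · exact Or.inr ⟨(hmem i hij).resolve_left hiA, hiA⟩
    · rintro (rfl | ⟨_, hiA⟩)
      · exact hjA
      · exact hiA
  have hcompC : (insert j B)ᶜ = A \ B := by
    ext i
    simp only [Finset.mem_compl, Finset.mem_insert, Finset.mem_sdiff]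
    constructor
    · intro hi
      push_neg at hi
      exact ⟨(hmem i hi.1).resolve_right hi.2, hi.2⟩
    · intro ⟨hiA, hiB⟩
      push_neg
      exact ⟨hAne i hiA, hiB⟩
  -- ν
  set ν : α → β → ℝ := fun x y => mu (x, y) / margX mu x with hνdef
  have hνn : ∀ x y, 0 ≤ ν x y := fun x y =>
    div_nonneg (hμn _) (Finset.sum_nonneg fun _ _ => hμn _)
  -- support inclusion
  have hsupp : ∀ p, 0 < lam p → 0 < θ p := by
    intro p hp
    have hmY : 0 < margY lam p.2 := by
      have : lam p ≤ margY lam p.2 :=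
        Finset.single_le_sum (fun x _ => hln (x, p.2)) (Finset.mem_univ p.1)
      linarith
    have hc : 0 < condX lam p.2 p.1 := div_pos hp hmY
    have := hθY p.1 p.2 (by simpa using hp)
    rw [this] at hc
    by_contra hne
    push_neg at hne
    have : θ (p.1, p.2) = 0 := le_antisymm (by simpa using hne) (hθn _)
    simp [condX, this] at hc
  -- factorization of θ
  have hprodn : ∀ q, 0 ≤ prodDist mu k q := fun q => Finset.prod_nonneg fun i _ => hμn _
  have hθfact : ∀ p : (Fin k → α) × (Fin k → β),
      θ p = margX θ p.1 * ∏ i, ν (p.1 i) (p.2 i) := by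
    rintro ⟨X, Y⟩
    by_cases hm : margX θ X = 0
    · have hz : θ (X, Y) = 0 :=
        (Finset.sum_eq_zero_iff_of_nonneg (fun y _ => hθn (X, y))).1 hm Y (Finset.mem_univ Y)
      simp [hz, hm]
    · have hm' : 0 < margX θ X :=
        lt_of_le_of_ne (Finset.sum_nonneg fun _ _ => hθn _) (Ne.symm hm)
      have hmprod : margX (prodDist mu k) X = ∏ i, margX mu (X i) := by
        show (∑ Y' : Fin k → β, ∏ i, mu (X i, Y' i)) = ∏ i, ∑ y, mu (X i, y)
        rw [Finset.prod_univ_sum, ← Fintype.piFinset_univ]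
      have hprod : ∀ Y', condY (prodDist mu k) X Y' = ∏ i, ν (X i) (Y' i) := by
        intro Y'
        show prodDist mu k (X, Y') / margX (prodDist mu k) X = _
        rw [hmprod]
        show (∏ i, mu (X i, Y' i)) / (∏ i, margX mu (X i)) = _
        rw [← Finset.prod_div_distrib]
      obtain ⟨Y₀, -, hY₀⟩ := Finset.exists_ne_zero_of_sum_ne_zero
        (show (∑ y, θ (X, y)) ≠ 0 from hm)
      have hY₀' : 0 < θ (X, Y₀) := lt_of_le_of_ne (hθn _) (Ne.symm hY₀)
      have hmp : margX (prodDist mu k) X ≠ 0 := by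
        have h2 : 0 < condY θ X Y₀ := div_pos hY₀' hm'
        rw [hθX X Y₀ hY₀'] at h2
        intro h0
        simp [condY, h0] at h2
      have hueq : ∀ Y', condY θ X Y' = condY (prodDist mu k) X Y' := by
        apply sum_eq_of_agree
        · intro Y'
          exact div_nonneg (hprodn _) (Finset.sum_nonneg fun _ _ => hprodn _)
        · show (∑ y, θ (X, y) / margX θ X)
            = ∑ y, prodDist mu k (X, y) / margX (prodDist mu k) X
          rw [← Finset.sum_div, ← Finset.sum_div]
          show margX θ X / margX θ X = margX (prodDist mu k) X / margX (prodDist mu k) X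
          rw [div_self hm, div_self hmp]
        · intro Y' hne
          apply hθX X Y'
          have : θ (X, Y') ≠ 0 := by
            intro h0
            apply hne
            show θ (X, Y') / margX θ X = 0
            rw [h0, zero_div]
          exact lt_of_le_of_ne (hθn _) (Ne.symm this)
      have e1 : θ (X, Y) = margX θ X * condY θ X Y := by
        show θ (X, Y) = margX θ X * (θ (X, Y) / margX θ X)
        field_simp
      rw [e1, hueq Y, hprod Y]
  -- factorization of λ
  set w : (Fin k → β) → ℝ := fun Y => margY lam Y / margY θ Y with hwdef
  have hwn : ∀ Y, 0 ≤ w Y := fun Y =>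
    div_nonneg (Finset.sum_nonneg fun _ _ => hln _) (Finset.sum_nonneg fun _ _ => hθn _)
  have hlfact : ∀ p : (Fin k → α) × (Fin k → β), lam p = w p.2 * θ p := by
    rintro ⟨X, Y⟩
    by_cases hm : margY lam Y = 0
    · have hz : lam (X, Y) = 0 :=
        (Finset.sum_eq_zero_iff_of_nonneg (fun x _ => hln (x, Y))).1 hm X (Finset.mem_univ X)
      have hw : w Y = 0 := by
        show margY lam Y / margY θ Y = 0
        rw [hm, zero_div]
      simp [hz, hw]
    · have hm' : 0 < margY lam Y :=
        lt_of_le_of_ne (Finset.sum_nonneg fun _ _ => hln _) (Ne.symm hm)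
      obtain ⟨X₀, -, hX₀⟩ := Finset.exists_ne_zero_of_sum_ne_zero
        (show (∑ x, lam (x, Y)) ≠ 0 from hm)
      have hX₀' : 0 < lam (X₀, Y) := lt_of_le_of_ne (hln _) (Ne.symm hX₀)
      have hθ₀ : 0 < θ (X₀, Y) := hsupp (X₀, Y) hX₀'
      have hmθ : 0 < margY θ Y := by
        have : θ (X₀, Y) ≤ margY θ Y :=
          Finset.single_le_sum (fun x _ => hθn (x, Y)) (Finset.mem_univ X₀)
        linarith
      have hueq : ∀ X', condX lam Y X' = condX θ Y X' := by
        apply sum_eq_of_agree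
        · intro X'
          exact div_nonneg (hθn _) (Finset.sum_nonneg fun _ _ => hθn _)
        · show (∑ x, lam (x, Y) / margY lam Y) = ∑ x, θ (x, Y) / margY θ Y
          rw [← Finset.sum_div, ← Finset.sum_div]
          show margY lam Y / margY lam Y = margY θ Y / margY θ Y
          rw [div_self hm, div_self hmθ.ne']
        · intro X' hne
          apply hθY X' Y
          have : lam (X', Y) ≠ 0 := by
            intro h0
            apply hne
            show lam (X', Y) / margY lam Y = 0
            rw [h0, zero_div]
          exact lt_of_le_of_ne (hln _) (Ne.symm this)
      have e1 : lam (X, Y) = margY lam Y * condX lam Y X := by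
        show lam (X, Y) = margY lam Y * (lam (X, Y) / margY lam Y)
        field_simp
      rw [e1, hueq X]
      show margY lam Y * (θ (X, Y) / margY θ Y) = margY lam Y / margY θ Y * θ (X, Y)
      field_simp
  -- key quantities
  set K : α → ℝ := fun x => ∑ X : Fin k → α,
      if (∀ i ∈ A, X i = a i) ∧ X j = x then margX θ X * ∏ i ∈ B \ A, ν (X i) (b i) else 0
    with hKdef
  set c : ℝ := (∏ i ∈ A ∩ B, ν (a i) (b i)) * ∏ i ∈ A \ B, ∑ y, ν (a i) y with hcdef
  set L : β → ℝ := fun y => ∑ Y : Fin k → β,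
      if (∀ i ∈ B, Y i = b i) ∧ Y j = y then w Y * ∏ i ∈ A, ν (a i) (Y i) else 0
    with hLdef
  have hKn : ∀ x, 0 ≤ K x := by
    intro x
    refine Finset.sum_nonneg fun X _ => ?_
    split
    · exact mul_nonneg (Finset.sum_nonneg fun _ _ => hθn _)
        (Finset.prod_nonneg fun i _ => hνn _ _)
    · exact le_refl 0
  have hLn : ∀ y, 0 ≤ L y := by
    intro y
    refine Finset.sum_nonneg fun Y _ => ?_
    split
    · exact mul_nonneg (hwn Y) (Finset.prod_nonneg fun i _ => hνn _ _)
    · exact le_refl 0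
  have hcn : 0 ≤ c :=
    mul_nonneg (Finset.prod_nonneg fun i _ => hνn _ _)
      (Finset.prod_nonneg fun i _ => Finset.sum_nonneg fun _ _ => hνn _ _)
  have hKx : ∀ x, (∑ X : Fin k → α,
      if (∀ i ∈ A, X i = a i) ∧ X j = x then margX θ X * ∏ i ∈ B \ A, ν (X i) (b i) else 0)
      = K x := fun x => rfl
  have hLx : ∀ y, (∑ Y : Fin k → β,
      if (∀ i ∈ B, Y i = b i) ∧ Y j = y then w Y * ∏ i ∈ A, ν (a i) (Y i) else 0)
      = L y := fun y => rfl
  -- the key sum computation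
  have keysum : ∀ (ω : (Fin k → β) → ℝ) (x : α) (y : β),
      (∑ p : (Fin k → α) × (Fin k → β),
          if (∀ i ∈ A, p.1 i = a i) ∧ (∀ i ∈ B, p.2 i = b i) ∧ p.1 j = x ∧ p.2 j = y
          then ω p.2 * θ p else 0)
        = ν x y * K x *
          ∑ Y : Fin k → β,
            (if (∀ i ∈ B, Y i = b i) ∧ Y j = y then ω Y * ∏ i ∈ A, ν (a i) (Y i) else 0) := by
    intro ω x y
    rw [Fintype.sum_prod_type, Finset.sum_comm]
    have hper : ∀ Y : Fin k → β,
        (∑ X : Fin k → α,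
          if (∀ i ∈ A, X i = a i) ∧ (∀ i ∈ B, Y i = b i) ∧ X j = x ∧ Y j = y
          then ω Y * θ (X, Y) else 0)
        = ν x y * K x * (if (∀ i ∈ B, Y i = b i) ∧ Y j = y
            then ω Y * ∏ i ∈ A, ν (a i) (Y i) else 0) := by
      intro Y
      by_cases hY : (∀ i ∈ B, Y i = b i) ∧ Y j = y
      · rw [if_pos hY]
        have hXper : ∀ X : Fin k → α,
            (if (∀ i ∈ A, X i = a i) ∧ (∀ i ∈ B, Y i = b i) ∧ X j = x ∧ Y j = y
              then ω Y * θ (X, Y) else 0)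
            = (ν x y * (ω Y * ∏ i ∈ A, ν (a i) (Y i))) *
              (if (∀ i ∈ A, X i = a i) ∧ X j = x
                then margX θ X * ∏ i ∈ B \ A, ν (X i) (b i) else 0) := by
          intro X
          by_cases hX : (∀ i ∈ A, X i = a i) ∧ X j = x
          · rw [if_pos ⟨hX.1, hY.1, hX.2, hY.2⟩, if_pos hX]
            rw [hθfact (X, Y)]
            have hsplit : (∏ i, ν (X i) (Y i))
                = (∏ i ∈ A, ν (a i) (Y i)) * (ν x y * ∏ i ∈ B \ A, ν (X i) (b i)) := by
              rw [← Finset.prod_mul_prod_compl A fun i => ν (X i) (Y i), hcompA,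
                Finset.prod_insert (fun h => hjB (Finset.mem_sdiff.1 h).1)]
              congr 1
              · exact Finset.prod_congr rfl fun i hi => by rw [hX.1 i hi]
              · congr 1
                · rw [hX.2, hY.2]
                · exact Finset.prod_congr rfl fun i hi => by
                    rw [hY.1 i (Finset.mem_sdiff.1 hi).1]
            rw [hsplit]
            ring
          · rw [if_neg (fun h => hX ⟨h.1, h.2.2.1⟩), if_neg hX, mul_zero]
        rw [Finset.sum_congr rfl fun X _ => hXper X, ← Finset.mul_sum, hKx x]
        ring
      · rw [if_neg hY, mul_zero]
        refine Finset.sum_eq_zero fun X _ => ?_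
        exact if_neg (fun h => hY ⟨h.2.1, h.2.2.2⟩)
    rw [Finset.sum_congr rfl fun Y _ => hper Y, ← Finset.mul_sum]
  -- the constant c
  have hLc : ∀ y : β,
      (∑ Y : Fin k → β, if (∀ i ∈ B, Y i = b i) ∧ Y j = y then ∏ i ∈ A, ν (a i) (Y i) else 0)
        = c := by
    intro y
    have hcond : ∀ Y : Fin k → β, ((∀ i ∈ B, Y i = b i) ∧ Y j = y)
        ↔ (∀ i ∈ insert j B, Y i = Function.update b j y i) := by
      intro Y
      constructor
      · rintro ⟨h1, h2⟩ i hi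
        rcases Finset.mem_insert.1 hi with rfl | hiB
        · simp [h2]
        · rw [Function.update_of_ne (hBne i hiB)]
          exact h1 i hiB
      · intro h
        refine ⟨fun i hiB => ?_, ?_⟩
        · have := h i (Finset.mem_insert_of_mem hiB)
          rwa [Function.update_of_ne (hBne i hiB)] at this
        · simpa using h j (Finset.mem_insert_self j B)
    have hrw : ∀ Y : Fin k → β,
        (if (∀ i ∈ B, Y i = b i) ∧ Y j = y then ∏ i ∈ A, ν (a i) (Y i) else 0)
        = (if ∀ i ∈ insert j B, Y i = Function.update b j y i
            then ∏ i, (fun i' (y' : β) => if i' ∈ A then ν (a i') y' else 1) i (Y i)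
            else 0) := by
      intro Y
      by_cases hc2 : (∀ i ∈ B, Y i = b i) ∧ Y j = y
      · rw [if_pos hc2, if_pos ((hcond Y).1 hc2)]
        rw [← Finset.prod_mul_prod_compl A]
        have e1 : (∏ i ∈ A, (fun i' (y' : β) => if i' ∈ A then ν (a i') y' else 1) i (Y i))
            = ∏ i ∈ A, ν (a i) (Y i) :=
          Finset.prod_congr rfl fun i hi => by simp [hi]
        have e2 : (∏ i ∈ Aᶜ, (fun i' (y' : β) => if i' ∈ A then ν (a i') y' else 1) i (Y i))
            = 1 :=
          Finset.prod_eq_one fun i hi => by simp [Finset.mem_compl.1 hi]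
        rw [e1, e2, mul_one]
      · rw [if_neg hc2, if_neg (fun h => hc2 ((hcond Y).2 h))]
    rw [Finset.sum_congr rfl fun Y _ => hrw Y,
      sum_pi_ite (insert j B) (Function.update b j y)
        (fun i' (y' : β) => if i' ∈ A then ν (a i') y' else 1), hcompC]
    have e3 : (∏ i ∈ insert j B,
        (fun i' (y' : β) => if i' ∈ A then ν (a i') y' else 1) i (Function.update b j y i))
        = ∏ i ∈ A ∩ B, ν (a i) (b i) := by
      rw [Finset.prod_insert hjB]
      have e4 : (fun i' (y' : β) => if i' ∈ A then ν (a i') y' else 1) j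
          (Function.update b j y j) = 1 := by simp [hjA]
      rw [e4, one_mul]
      have e5 : ∀ i ∈ B, (fun i' (y' : β) => if i' ∈ A then ν (a i') y' else 1) i
          (Function.update b j y i) = (if i ∈ A then ν (a i) (b i) else 1) := by
        intro i hi
        rw [Function.update_of_ne (hBne i hi)]
      rw [Finset.prod_congr rfl e5, Finset.prod_ite_mem, Finset.inter_comm]
    rw [e3]
    have e6 : (∏ i ∈ A \ B, ∑ y',
        (fun i' (y'' : β) => if i' ∈ A then ν (a i') y'' else 1) i y')
        = ∏ i ∈ A \ B, ∑ y', ν (a i) y' :=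
      Finset.prod_congr rfl fun i hi => by simp [(Finset.mem_sdiff.1 hi).1]
    rw [e6, hcdef]
  -- numerators
  have hNθ : ∀ x y,
      (∑ p : (Fin k → α) × (Fin k → β),
          if (∀ i ∈ A, p.1 i = a i) ∧ (∀ i ∈ B, p.2 i = b i) ∧ p.1 j = x ∧ p.2 j = y
          then θ p else 0) = ν x y * (K x * c) := by
    intro x y
    have h0 := keysum (fun _ => 1) x y
    simp only [one_mul] at h0
    rw [h0, hLc y, mul_assoc]
  have hNl : ∀ x y,
      (∑ p : (Fin k → α) × (Fin k → β),
          if (∀ i ∈ A, p.1 i = a i) ∧ (∀ i ∈ B, p.2 i = b i) ∧ p.1 j = x ∧ p.2 j = y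
          then lam p else 0) = ν x y * (K x * L y) := by
    intro x y
    have h1 : ∀ p : (Fin k → α) × (Fin k → β),
        (if (∀ i ∈ A, p.1 i = a i) ∧ (∀ i ∈ B, p.2 i = b i) ∧ p.1 j = x ∧ p.2 j = y
          then lam p else 0)
        = (if (∀ i ∈ A, p.1 i = a i) ∧ (∀ i ∈ B, p.2 i = b i) ∧ p.1 j = x ∧ p.2 j = y
          then w p.2 * θ p else 0) := fun p => by rw [hlfact p]
    rw [Finset.sum_congr rfl fun p _ => h1 p, keysum w x y, hLx y, mul_assoc]
  -- denominators
  obtain ⟨p₀, -, hp₀⟩ := Finset.exists_ne_zero_of_sum_ne_zero hpos.ne'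
  have hEp₀ : (∀ i ∈ A, p₀.1 i = a i) ∧ (∀ i ∈ B, p₀.2 i = b i) := by
    by_contra h
    rw [if_neg h] at hp₀
    exact hp₀ rfl
  have hlp₀ : 0 < lam p₀ := by
    rw [if_pos hEp₀] at hp₀
    exact lt_of_le_of_ne (hln _) (Ne.symm hp₀)
  set Zl : ℝ := ∑ p : (Fin k → α) × (Fin k → β),
      if (∀ i ∈ A, p.1 i = a i) ∧ (∀ i ∈ B, p.2 i = b i) then lam p else 0 with hZldef
  have hZl : 0 < Zl := hpos
  have hZθ : 0 < ∑ p : (Fin k → α) × (Fin k → β),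
      if (∀ i ∈ A, p.1 i = a i) ∧ (∀ i ∈ B, p.2 i = b i) then θ p else 0 := by
    have h1 : (if (∀ i ∈ A, p₀.1 i = a i) ∧ (∀ i ∈ B, p₀.2 i = b i) then θ p₀ else 0)
        ≤ ∑ p : (Fin k → α) × (Fin k → β),
          if (∀ i ∈ A, p.1 i = a i) ∧ (∀ i ∈ B, p.2 i = b i) then θ p else 0 :=
      Finset.single_le_sum
        (f := fun p : (Fin k → α) × (Fin k → β) =>
          if (∀ i ∈ A, p.1 i = a i) ∧ (∀ i ∈ B, p.2 i = b i) then θ p else 0)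
        (fun p _ => by split
                       · exact hθn p
                       · exact le_refl 0)
        (Finset.mem_univ p₀)
    rw [if_pos hEp₀] at h1
    exact lt_of_lt_of_le (hsupp p₀ hlp₀) h1
  set Zθ : ℝ := ∑ p : (Fin k → α) × (Fin k → β),
      if (∀ i ∈ A, p.1 i = a i) ∧ (∀ i ∈ B, p.2 i = b i) then θ p else 0 with hZθdef
  have hccθ : ∀ x y, condCoord θ j A B a b (x, y) = ν x y * (K x * c) / Zθ := by
    intro x y
    rw [hZθdef, ← hNθ x y]
    rfl
  have hccl : ∀ x y, condCoord lam j A B a b (x, y) = ν x y * (K x * L y) / Zl := by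
    intro x y
    rw [hZldef, ← hNl x y]
    rfl
  have pos_factor : ∀ u v : ℝ, 0 ≤ u → 0 ≤ v → 0 < u * v → 0 < u ∧ 0 < v := by
    intro u v hu hv huv
    constructor
    · rcases hu.lt_or_eq with h | h
      · exact h
      · exfalso; rw [← h, zero_mul] at huv; exact lt_irrefl 0 huv
    · rcases hv.lt_or_eq with h | h
      · exact h
      · exfalso; rw [← h, mul_zero] at huv; exact lt_irrefl 0 huv
  have hdd : ∀ t s z : ℝ, z ≠ 0 → s ≠ 0 → t / z / (s / z) = t / s := by
    intro t s z hz hs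
    field_simp
  refine ⟨condCoord θ j A B a b, ⟨?_, ?_⟩, ?_, ?_⟩
  · rintro ⟨x, y⟩
    rw [hccθ x y]
    exact div_nonneg (mul_nonneg (hνn _ _) (mul_nonneg (hKn _) hcn)) hZθ.le
  · have h1 : ∀ q : α × β, condCoord θ j A B a b q
        = (∑ p : (Fin k → α) × (Fin k → β),
            if (∀ i ∈ A, p.1 i = a i) ∧ (∀ i ∈ B, p.2 i = b i) ∧ p.1 j = q.1 ∧ p.2 j = q.2
            then θ p else 0) / Zθ := by
      intro q
      rw [hZθdef]
      rfl
    rw [Finset.sum_congr rfl fun q _ => h1 q, ← Finset.sum_div]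
    have hnum : (∑ q : α × β, ∑ p : (Fin k → α) × (Fin k → β),
        if (∀ i ∈ A, p.1 i = a i) ∧ (∀ i ∈ B, p.2 i = b i) ∧ p.1 j = q.1 ∧ p.2 j = q.2
        then θ p else 0) = Zθ := by
      rw [Finset.sum_comm]
      have hper2 : ∀ p : (Fin k → α) × (Fin k → β),
          (∑ q : α × β,
            if (∀ i ∈ A, p.1 i = a i) ∧ (∀ i ∈ B, p.2 i = b i) ∧ p.1 j = q.1 ∧ p.2 j = q.2
            then θ p else 0)
          = (if (∀ i ∈ A, p.1 i = a i) ∧ (∀ i ∈ B, p.2 i = b i) then θ p else 0) := by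
        intro p
        by_cases hE : (∀ i ∈ A, p.1 i = a i) ∧ (∀ i ∈ B, p.2 i = b i)
        · rw [if_pos hE]
          have hc3 : ∀ q : α × β,
              ((∀ i ∈ A, p.1 i = a i) ∧ (∀ i ∈ B, p.2 i = b i) ∧ p.1 j = q.1 ∧ p.2 j = q.2)
              ↔ ((p.1 j, p.2 j) = q) := by
            intro q
            constructor
            · rintro ⟨-, -, h1', h2'⟩
              exact Prod.ext h1' h2'
            · rintro rfl
              exact ⟨hE.1, hE.2, rfl, rfl⟩
          rw [Finset.sum_congr rfl fun q _ => if_congr (hc3 q) rfl rfl]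
          simp
        · rw [if_neg hE]
          exact Finset.sum_eq_zero fun q _ => if_neg (fun h => hE ⟨h.1, h.2.1⟩)
      rw [Finset.sum_congr rfl fun p _ => hper2 p]
    rw [hnum, div_self hZθ.ne']
  · -- OneWayX
    intro x y hxy
    rw [hccθ x y] at hxy
    have hnum : 0 < ν x y * (K x * c) := by
      have he : ν x y * (K x * c) = (ν x y * (K x * c) / Zθ) * Zθ :=
        (div_mul_cancel₀ _ hZθ.ne').symm
      rw [he]
      exact mul_pos hxy hZθ
    obtain ⟨hν1, hKc⟩ := pos_factor _ _ (hνn x y) (mul_nonneg (hKn x) hcn) hnum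
    have hmgx : margX mu x ≠ 0 := by
      intro h0
      have hz : ν x y = 0 := by
        show mu (x, y) / margX mu x = 0
        rw [h0, div_zero]
      rw [hz] at hν1
      exact lt_irrefl 0 hν1
    have hsumν : (∑ y', ν x y') = 1 := by
      show (∑ y', mu (x, y') / margX mu x) = 1
      rw [← Finset.sum_div]
      exact div_self hmgx
    have hmarg : margX (condCoord θ j A B a b) x = (K x * c) / Zθ := by
      show (∑ y', condCoord θ j A B a b (x, y')) = _
      rw [Finset.sum_congr rfl fun y' _ => hccθ x y', ← Finset.sum_div]
      congr 1
      rw [← Finset.sum_mul, hsumν, one_mul]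
    show condCoord θ j A B a b (x, y) / margX (condCoord θ j A B a b) x
        = mu (x, y) / margX mu x
    rw [hccθ x y, hmarg, hdd _ _ _ hZθ.ne' hKc.ne', mul_div_assoc, div_self hKc.ne', mul_one]
  · -- OneWayY
    intro x y hxy
    rw [hccl x y] at hxy
    have hnum : 0 < ν x y * (K x * L y) := by
      have he : ν x y * (K x * L y) = (ν x y * (K x * L y) / Zl) * Zl :=
        (div_mul_cancel₀ _ hZl.ne').symm
      rw [he]
      exact mul_pos hxy hZl
    obtain ⟨hν1, h2⟩ := pos_factor _ _ (hνn x y) (mul_nonneg (hKn x) (hLn y)) hnum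
    obtain ⟨hK1, hL1⟩ := pos_factor _ _ (hKn x) (hLn y) h2
    have hc1 : 0 < c := by
      obtain ⟨Y₀, -, hY₀⟩ := Finset.exists_ne_zero_of_sum_ne_zero
        (show (∑ Y : Fin k → β,
          if (∀ i ∈ B, Y i = b i) ∧ Y j = y then w Y * ∏ i ∈ A, ν (a i) (Y i) else 0) ≠ 0
          from by rw [hLx y]; exact hL1.ne')
      have hY₀c : (∀ i ∈ B, Y₀ i = b i) ∧ Y₀ j = y := by
        by_contra h
        rw [if_neg h] at hY₀
        exact hY₀ rfl
      rw [if_pos hY₀c] at hY₀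
      have hprodY : 0 < ∏ i ∈ A, ν (a i) (Y₀ i) := by
        rcases (Finset.prod_nonneg fun i _ => hνn (a i) (Y₀ i) :
            (0:ℝ) ≤ ∏ i ∈ A, ν (a i) (Y₀ i)).lt_or_eq with h | h
        · exact h
        · exfalso
          rw [← h, mul_zero] at hY₀
          exact hY₀ rfl
      have hle : (if (∀ i ∈ B, Y₀ i = b i) ∧ Y₀ j = y then ∏ i ∈ A, ν (a i) (Y₀ i) else 0)
          ≤ ∑ Y : Fin k → β,
            if (∀ i ∈ B, Y i = b i) ∧ Y j = y then ∏ i ∈ A, ν (a i) (Y i) else 0 :=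
        Finset.single_le_sum
          (f := fun Y : Fin k → β =>
            if (∀ i ∈ B, Y i = b i) ∧ Y j = y then ∏ i ∈ A, ν (a i) (Y i) else 0)
          (fun Y _ => by split
                         · exact Finset.prod_nonneg fun i _ => hνn _ _
                         · exact le_refl 0)
          (Finset.mem_univ Y₀)
      rw [if_pos hY₀c] at hle
      rw [← hLc y]
      exact lt_of_lt_of_le hprodY hle
    set S : ℝ := ∑ x' : α, ν x' y * K x' with hSdef
    have hSn : 0 < S := by
      have hle : ν x y * K x ≤ S :=
        Finset.single_le_sum (f := fun x' => ν x' y * K x')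
          (fun x' _ => mul_nonneg (hνn _ _) (hKn _)) (Finset.mem_univ x)
      exact lt_of_lt_of_le (mul_pos hν1 hK1) hle
    have hmargl : margY (condCoord lam j A B a b) y = S * L y / Zl := by
      show (∑ x', condCoord lam j A B a b (x', y)) = _
      rw [Finset.sum_congr rfl fun x' _ => hccl x' y, ← Finset.sum_div]
      congr 1
      rw [hSdef, Finset.sum_mul]
      exact Finset.sum_congr rfl fun x' _ => by ring
    have hmargθ : margY (condCoord θ j A B a b) y = S * c / Zθ := by
      show (∑ x', condCoord θ j A B a b (x', y)) = _
      rw [Finset.sum_congr rfl fun x' _ => hccθ x' y, ← Finset.sum_div]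
      congr 1
      rw [hSdef, Finset.sum_mul]
      exact Finset.sum_congr rfl fun x' _ => by ring
    show condCoord lam j A B a b (x, y) / margY (condCoord lam j A B a b) y
        = condCoord θ j A B a b (x, y) / margY (condCoord θ j A B a b) y
    rw [hccl x y, hccθ x y, hmargl, hmargθ,
      hdd _ _ _ hZl.ne' (mul_pos hSn hL1).ne', hdd _ _ _ hZθ.ne' (mul_pos hSn hc1).ne']
    field_simp


end
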